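/- arXiv:1506.06146 — 3 statements merged into one kernel-verified Lean document; each statement's English description precedes it below -/
import Mathlib

section
/- Let A be a commutative ring and let 𝔐 be an A[[u]]-module. Then 𝔐 is a finitely generated projective A[[u]]-module if and only if 𝔐 is u-torsion free, u-adically complete and separated, and 𝔐/u𝔐 is a finitely generated projective A-module. Moreover, if these conditions hold, there is an isomorphism of A[[u]]-modules (𝔐/u𝔐) ⊗_A A[[u]] ≅ 𝔐 reducing to the identity modulo u. -/
open scoped TensorProduct

/-- The submodule `u·𝔐` of a module `𝔐` over the power series ring `A[[u]]`. -/
noncomputable def uSub (A : Type*) [CommRing A] (M : Type*) [AddCommGroup M]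
    [Module (PowerSeries A) M] : Submodule (PowerSeries A) M :=
  Ideal.span {(PowerSeries.X : PowerSeries A)} • (⊤ : Submodule (PowerSeries A) M)

section Generic

variable {R : Type*} [CommRing R] {M : Type*} [AddCommGroup M] [Module R M]

lemma mem_span_pow_smul (x : R) (n : ℕ) (m : M) :
    m ∈ (Ideal.span {x} ^ n • ⊤ : Submodule R M) ↔ ∃ y, x ^ n • y = m := by
  rw [Ideal.span_singleton_pow]
  constructor
  · intro h
    refine Submodule.smul_induction_on h ?_ ?_
    · rintro r hr m' -
      obtain ⟨c, rfl⟩ := Ideal.mem_span_singleton'.mp hr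
      exact ⟨c • m', by rw [smul_smul, mul_comm]⟩
    · rintro m₁ m₂ ⟨y₁, rfl⟩ ⟨y₂, rfl⟩
      exact ⟨y₁ + y₂, by rw [smul_add]⟩
  · rintro ⟨y, rfl⟩
    exact Submodule.smul_mem_smul (Ideal.mem_span_singleton_self _) trivial

lemma smodeq_iff (x : R) (n : ℕ) (m m' : M) :
    m ≡ m' [SMOD (Ideal.span {x} ^ n • ⊤ : Submodule R M)] ↔ ∃ y, x ^ n • y = m - m' := by
  rw [SModEq.sub_mem, mem_span_pow_smul]

lemma isAdicComplete_of_retract (x : R) {P Q : Type*} [AddCommGroup P] [Module R P]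
    [AddCommGroup Q] [Module R Q] [hQ : IsAdicComplete (Ideal.span {x}) Q]
    (i : P →ₗ[R] Q) (r : Q →ₗ[R] P) (h : ∀ p, r (i p) = p) :
    IsAdicComplete (Ideal.span {x}) P := by
  refine { haus' := ?_, prec' := ?_ }
  · intro p hp
    have : i p = 0 := by
      apply hQ.haus'
      intro n
      rw [SModEq.zero, mem_span_pow_smul]
      obtain ⟨y, hy⟩ := (smodeq_iff x n p 0).mp (hp n)
      rw [sub_zero] at hy
      exact ⟨i y, by rw [← map_smul, hy]⟩
    rw [← h p, this, map_zero]
  · intro f hf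
    obtain ⟨L, hL⟩ := hQ.prec' (fun n => i (f n)) (by
      intro m n hmn
      rw [smodeq_iff]
      obtain ⟨y, hy⟩ := (smodeq_iff x m (f m) (f n)).mp (hf hmn)
      exact ⟨i y, by rw [← map_smul, hy, map_sub]⟩)
    refine ⟨r L, fun n => ?_⟩
    rw [smodeq_iff]
    obtain ⟨y, hy⟩ := (smodeq_iff x n (i (f n)) L).mp (hL n)
    refine ⟨r y, ?_⟩
    rw [← map_smul, hy, map_sub, h]

lemma isAdicComplete_pi (x : R) [hR : IsAdicComplete (Ideal.span {x}) M] (k : ℕ) :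
    IsAdicComplete (Ideal.span {x}) (Fin k → M) := by
  refine { haus' := ?_, prec' := ?_ }
  · intro p hp
    funext j
    apply hR.haus'
    intro n
    rw [SModEq.zero, mem_span_pow_smul]
    obtain ⟨y, hy⟩ := (smodeq_iff x n p 0).mp (hp n)
    rw [sub_zero] at hy
    exact ⟨y j, congrFun hy j⟩
  · intro f hf
    have : ∀ j : Fin k, ∃ L : M, ∀ n, f n j ≡ L [SMOD (Ideal.span {x} ^ n • ⊤ : Submodule R M)] := by
      intro j
      apply hR.prec'
      intro m n hmn
      rw [smodeq_iff]
      obtain ⟨y, hy⟩ := (smodeq_iff x m (f m) (f n)).mp (hf hmn)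
      exact ⟨y j, congrFun hy j⟩
    choose L hL using this
    refine ⟨L, fun n => ?_⟩
    rw [smodeq_iff]
    have : ∀ j, ∃ y, x ^ n • y = f n j - L j := fun j => (smodeq_iff x n _ _).mp (hL j n)
    choose y hy using this
    exact ⟨y, funext fun j => (hy j).trans rfl⟩

lemma exists_retract (R M : Type*) [CommRing R] [AddCommGroup M] [Module R M]
    [Module.Finite R M] [Module.Projective R M] :
    ∃ (k : ℕ) (i : M →ₗ[R] (Fin k → R)) (r : (Fin k → R) →ₗ[R] M), ∀ m, r (i m) = m := by
  obtain ⟨k, r, hr⟩ := Module.Finite.exists_fin' R M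
  obtain ⟨i, hi⟩ := Module.projective_lifting_property r LinearMap.id hr
  exact ⟨k, i, r, fun m => congrArg (fun g => g m) hi⟩

end Generic

section PS

variable {A : Type*} [CommRing A]

lemma X_mul_cancel {f : PowerSeries A} (h : (PowerSeries.X : PowerSeries A) * f = 0) : f = 0 := by
  ext n
  have := congrArg (PowerSeries.coeff (n + 1)) h
  rwa [PowerSeries.coeff_succ_X_mul, map_zero] at this

instance psAdicComplete : IsAdicComplete (Ideal.span {(PowerSeries.X : PowerSeries A)})
    (PowerSeries A) := by
  refine { haus' := ?_, prec' := ?_ }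
  · intro p hp
    ext n
    obtain ⟨y, hy⟩ := (smodeq_iff _ (n + 1) p 0).mp (hp (n + 1))
    rw [sub_zero] at hy
    have : (PowerSeries.X : PowerSeries A) ^ (n + 1) ∣ p := ⟨y, by rw [← hy]; rfl⟩
    rw [map_zero]
    exact PowerSeries.X_pow_dvd_iff.mp this n (Nat.lt_succ_self n)
  · intro f hf
    refine ⟨PowerSeries.mk fun n => PowerSeries.coeff n (f (n + 1)), fun n => ?_⟩
    rw [smodeq_iff]
    have : (PowerSeries.X : PowerSeries A) ^ n ∣
        f n - PowerSeries.mk fun k => PowerSeries.coeff k (f (k + 1)) := by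
      rw [PowerSeries.X_pow_dvd_iff]
      intro k hk
      obtain ⟨y, hy⟩ := (smodeq_iff _ (k + 1) (f (k + 1)) (f n)).mp (hf hk)
      have hcoeff : PowerSeries.coeff k (f (k + 1)) = PowerSeries.coeff k (f n) := by
        have : PowerSeries.coeff k (f (k + 1) - f n) = 0 := by
          have hdvd : (PowerSeries.X : PowerSeries A) ^ (k + 1) ∣ f (k + 1) - f n :=
            ⟨y, by rw [← hy]; rfl⟩
          exact PowerSeries.X_pow_dvd_iff.mp hdvd k (Nat.lt_succ_self k)
        rw [map_sub, sub_eq_zero] at this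
        exact this
      rw [map_sub, PowerSeries.coeff_mk, hcoeff, sub_self]
    obtain ⟨y, hy⟩ := this
    exact ⟨y, by rw [smul_eq_mul]; exact hy.symm⟩

end PS

section Quot

variable {A : Type*} [CommRing A] {M : Type*} [AddCommGroup M]
    [Module A M] [Module (PowerSeries A) M] [IsScalarTower A (PowerSeries A) M]

lemma mem_uSub_iff (m : M) :
    m ∈ uSub A M ↔ ∃ y, (PowerSeries.X : PowerSeries A) • y = m := by
  have h1 : uSub A M = Ideal.span {(PowerSeries.X : PowerSeries A)} ^ 1 •
      (⊤ : Submodule (PowerSeries A) M) := by rw [pow_one]; rfl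
  rw [h1, mem_span_pow_smul, pow_one]

lemma X_smul_quot (n : M ⧸ uSub A M) : (PowerSeries.X : PowerSeries A) • n = 0 := by
  obtain ⟨m, rfl⟩ := Submodule.Quotient.mk_surjective _ n
  rw [← Submodule.Quotient.mk_smul, Submodule.Quotient.mk_eq_zero]
  exact (mem_uSub_iff _).mpr ⟨m, rfl⟩

lemma psalgebraMap (a : A) : algebraMap A (PowerSeries A) a = PowerSeries.C a := by
  simp [PowerSeries.algebraMap_apply]

lemma smul_quot_eq (c : PowerSeries A) (n : M ⧸ uSub A M) :
    c • n = (PowerSeries.constantCoeff c) • n := by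
  obtain ⟨h, hh⟩ : (PowerSeries.X : PowerSeries A) ∣
      c - PowerSeries.C (PowerSeries.constantCoeff c) := by
    rw [PowerSeries.X_dvd_iff, map_sub, PowerSeries.constantCoeff_C, sub_self]
  have hc : c = PowerSeries.C (PowerSeries.constantCoeff c) + PowerSeries.X * h := by
    rw [← hh]; ring
  calc c • n = (PowerSeries.C (PowerSeries.constantCoeff c)) • n
        + (PowerSeries.X * h) • n := by rw [← add_smul, ← hc]
    _ = (PowerSeries.constantCoeff c) • n := by
        rw [mul_comm, mul_smul, X_smul_quot, smul_zero, add_zero, ← psalgebraMap,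
          algebraMap_smul]

end Quot

section Key

variable {A : Type*} [CommRing A] {M : Type*} [AddCommGroup M]
    [Module A M] [Module (PowerSeries A) M] [IsScalarTower A (PowerSeries A) M]

set_option linter.unusedSectionVars false

lemma tmul_const (a : A) (n : M ⧸ uSub A M) :
    (1 : PowerSeries A) ⊗ₜ[A] (a • n) = (PowerSeries.C a) ⊗ₜ[A] n := by
  rw [← TensorProduct.smul_tmul, ← psalgebraMap, Algebra.algebraMap_eq_smul_one]

set_option maxHeartbeats 1000000 in
lemma key (htf : ∀ m : M, (PowerSeries.X : PowerSeries A) • m = 0 → m = 0)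
    (hcomp : IsAdicComplete (Ideal.span {(PowerSeries.X : PowerSeries A)}) M)
    (hfin : Module.Finite A (M ⧸ uSub A M)) (hproj : Module.Projective A (M ⧸ uSub A M)) :
    ∃ e : (TensorProduct A (PowerSeries A) (M ⧸ uSub A M)) ≃ₗ[PowerSeries A] M,
      ∀ p, Submodule.Quotient.mk (e p) =
        (LinearMap.id (R := A) (M := M ⧸ uSub A M)).liftBaseChange (PowerSeries A) p := by
  set R := PowerSeries A
  set N := M ⧸ uSub A M with hN
  set g : (TensorProduct A R N) →ₗ[R] N :=
    (LinearMap.id (R := A) (M := N)).liftBaseChange R with hg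
  set π : M →ₗ[R] N := (uSub A M).mkQ with hπdef
  have hπs : Function.Surjective π := Submodule.mkQ_surjective _
  obtain ⟨f, hf⟩ := Module.projective_lifting_property π g hπs
  have hfp : ∀ p, π (f p) = g p := fun p => LinearMap.congr_fun hf p
  -- section modulo X
  have hsec : ∀ p : TensorProduct A R N, ∃ p',
      (PowerSeries.X : R) • p' = p - (1 : R) ⊗ₜ[A] (g p) := by
    intro p
    induction p with
    | zero => exact ⟨0, by simp⟩
    | tmul r n =>
      obtain ⟨h, hh⟩ : (PowerSeries.X : R) ∣ r - PowerSeries.C (PowerSeries.constantCoeff r) := by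
        rw [PowerSeries.X_dvd_iff, map_sub, PowerSeries.constantCoeff_C, sub_self]
      refine ⟨h ⊗ₜ[A] n, ?_⟩
      have h1 : g (r ⊗ₜ[A] n) = (PowerSeries.constantCoeff r) • n := by
        rw [hg, LinearMap.liftBaseChange_tmul, LinearMap.id_apply, smul_quot_eq]
      rw [h1, tmul_const, TensorProduct.smul_tmul', smul_eq_mul, ← TensorProduct.sub_tmul, ← hh]
    | add p q hp hq =>
      obtain ⟨p', hp'⟩ := hp
      obtain ⟨q', hq'⟩ := hq
      refine ⟨p' + q', ?_⟩
      rw [smul_add, hp', hq', map_add, TensorProduct.tmul_add]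
      abel
  -- retract structure on the base-changed module
  obtain ⟨k, iN, rN, hNr⟩ := exists_retract A N
  set c : (Fin k → A) →ₗ[A] (Fin k → R) :=
    LinearMap.pi (fun j => (Algebra.linearMap A R).comp (LinearMap.proj j)) with hc
  set iP : TensorProduct A R N →ₗ[R] (Fin k → R) := (c.comp iN).liftBaseChange R with hiP
  set rP : (Fin k → R) →ₗ[R] TensorProduct A R N :=
    ∑ j : Fin k, (LinearMap.proj j : (Fin k → R) →ₗ[R] R).smulRight
      ((1 : R) ⊗ₜ[A] rN (Pi.single j 1)) with hrP
  have hrPapp : ∀ w : Fin k → R,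
      rP w = ∑ j : Fin k, (w j) • ((1 : R) ⊗ₜ[A] rN (Pi.single j 1)) := by
    intro w
    rw [hrP, LinearMap.sum_apply]
    rfl
  have hretr : ∀ p, rP (iP p) = p := by
    intro p
    induction p with
    | zero => rw [map_zero, map_zero]
    | tmul r n =>
      have h1 : iP (r ⊗ₜ[A] n) = fun j => r * PowerSeries.C (iN n j) := by
        rw [hiP, LinearMap.liftBaseChange_tmul]
        funext j
        simp only [Pi.smul_apply, hc, LinearMap.pi_apply, LinearMap.comp_apply,
          LinearMap.proj_apply, Algebra.linearMap_apply, smul_eq_mul]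
        rw [psalgebraMap]
      rw [h1, hrPapp]
      have h2 : ∀ j : Fin k, (r * PowerSeries.C (iN n j)) • ((1 : R) ⊗ₜ[A] rN (Pi.single j 1))
          = r • ((1 : R) ⊗ₜ[A] ((iN n j) • rN (Pi.single j 1))) := by
        intro j
        rw [mul_smul, tmul_const]
        congr 1
        rw [TensorProduct.smul_tmul', smul_eq_mul, mul_one]
      rw [Finset.sum_congr rfl (fun j _ => h2 j), ← Finset.smul_sum, ← TensorProduct.tmul_sum]
      have h3 : ∑ j : Fin k, (iN n j) • rN (Pi.single j 1) = n := by
        have h4 : ∀ j : Fin k, (iN n j) • rN (Pi.single j 1) = rN (Pi.single j (iN n j)) := by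
          intro j
          rw [← map_smul, ← Pi.single_smul, smul_eq_mul, mul_one]
        rw [Finset.sum_congr rfl (fun j _ => h4 j), ← map_sum, Finset.univ_sum_single, hNr]
      rw [h3, TensorProduct.smul_tmul', smul_eq_mul, mul_one]
    | add p q hp hq => rw [map_add, map_add, hp, hq]
  -- torsion-freeness and completeness of the base change
  have hQtf : ∀ w : Fin k → R, (PowerSeries.X : R) • w = 0 → w = 0 := by
    intro w hw
    funext j
    have : (PowerSeries.X : R) * w j = 0 := congrFun hw j
    exact X_mul_cancel this
  have hPtf : ∀ p : TensorProduct A R N, (PowerSeries.X : R) • p = 0 → p = 0 := by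
    intro p hp
    have h1 : iP p = 0 := hQtf _ (by rw [← map_smul, hp, map_zero])
    rw [← hretr p, h1, map_zero]
  haveI hQc : IsAdicComplete (Ideal.span {(PowerSeries.X : R)}) (Fin k → R) :=
    isAdicComplete_pi (M := R) _ k
  haveI hPc : IsAdicComplete (Ideal.span {(PowerSeries.X : R)}) (TensorProduct A R N) :=
    isAdicComplete_of_retract _ iP rP hretr
  -- injectivity
  have hinj : ∀ p : TensorProduct A R N, f p = 0 → p = 0 := by
    intro p hp0
    have H : ∀ n : ℕ, ∀ p : TensorProduct A R N, f p = 0 →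
        ∃ y, (PowerSeries.X : R) ^ n • y = p := by
      intro n
      induction n with
      | zero => exact fun p _ => ⟨p, by rw [pow_zero, one_smul]⟩
      | succ n ih =>
        intro p hp
        have hgp : g p = 0 := by rw [← hfp p, hp, map_zero]
        obtain ⟨p₁, hp₁⟩ := hsec p
        rw [hgp, TensorProduct.tmul_zero, sub_zero] at hp₁
        have hf1 : f p₁ = 0 := by
          apply htf
          rw [← map_smul, hp₁, hp]
        obtain ⟨y, hy⟩ := ih p₁ hf1
        exact ⟨y, by rw [pow_succ', mul_smul, hy, hp₁]⟩
    apply hPc.haus'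
    intro n
    rw [SModEq.zero, mem_span_pow_smul]
    exact H n p hp0
  -- surjectivity
  have hsurj : Function.Surjective f := by
    intro m
    have hstep : ∀ m' : M, ∃ m'', (PowerSeries.X : R) • m''
        = m' - f ((1 : R) ⊗ₜ[A] (π m')) := by
      intro m'
      have h0 : π (m' - f ((1 : R) ⊗ₜ[A] (π m'))) = 0 := by
        rw [map_sub, hfp, hg, LinearMap.liftBaseChange_tmul, LinearMap.id_apply, one_smul,
          sub_self]
      rw [hπdef, Submodule.mkQ_apply, Submodule.Quotient.mk_eq_zero] at h0
      exact (mem_uSub_iff _).mp h0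
    choose step hstepp using hstep
    set mseq : ℕ → M := fun n => Nat.rec m (fun _ prev => step prev) n with hmseq
    have hmseq0 : mseq 0 = m := rfl
    have hmseqS : ∀ n, mseq (n + 1) = step (mseq n) := fun n => rfl
    set qseq : ℕ → TensorProduct A R N :=
      fun n => ∑ i ∈ Finset.range n, (PowerSeries.X : R) ^ i • ((1 : R) ⊗ₜ[A] π (mseq i))
      with hqseq
    have hq : ∀ n, m - f (qseq n) = (PowerSeries.X : R) ^ n • mseq n := by
      intro n
      induction n with
      | zero => simp [hqseq, hmseq0]
      | succ n ih =>
        have h1 : qseq (n + 1) = qseq n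
            + (PowerSeries.X : R) ^ n • ((1 : R) ⊗ₜ[A] π (mseq n)) := by
          simp only [hqseq]
          rw [Finset.sum_range_succ]
        calc m - f (qseq (n + 1))
            = (m - f (qseq n)) - (PowerSeries.X : R) ^ n • f ((1 : R) ⊗ₜ[A] π (mseq n)) := by
              rw [h1, map_add, map_smul]; ring_nf; abel
          _ = (PowerSeries.X : R) ^ n • (mseq n - f ((1 : R) ⊗ₜ[A] π (mseq n))) := by
              rw [ih, smul_sub]
          _ = (PowerSeries.X : R) ^ (n + 1) • mseq (n + 1) := by
              rw [← hstepp (mseq n), ← hmseqS, smul_smul, ← pow_succ]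
    have hcauchy : ∀ {a b : ℕ}, a ≤ b → qseq a ≡ qseq b
        [SMOD (Ideal.span {(PowerSeries.X : R)} ^ a • ⊤ : Submodule R (TensorProduct A R N))] := by
      intro a b hab
      rw [smodeq_iff]
      induction b, hab using Nat.le_induction with
      | base => exact ⟨0, by rw [smul_zero, sub_self]⟩
      | succ b hab ih =>
        obtain ⟨y, hy⟩ := ih
        refine ⟨y - (PowerSeries.X : R) ^ (b - a) • ((1 : R) ⊗ₜ[A] π (mseq b)), ?_⟩
        have h2 : (PowerSeries.X : R) ^ b • ((1 : R) ⊗ₜ[A] π (mseq b))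
            = (PowerSeries.X : R) ^ a • ((PowerSeries.X : R) ^ (b - a)
              • ((1 : R) ⊗ₜ[A] π (mseq b))) := by
          rw [← mul_smul, ← pow_add, Nat.add_sub_cancel' hab]
        have h3 : qseq (b + 1) = qseq b
            + (PowerSeries.X : R) ^ b • ((1 : R) ⊗ₜ[A] π (mseq b)) := by
          simp only [hqseq]
          rw [Finset.sum_range_succ]
        rw [smul_sub, hy, h3, h2]
        abel
    obtain ⟨L, hL⟩ := hPc.prec' qseq hcauchy
    refine ⟨L, ?_⟩
    have hzero : m - f L = 0 := by
      apply hcomp.haus'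
      intro n
      rw [SModEq.zero, mem_span_pow_smul]
      obtain ⟨y, hy⟩ := (smodeq_iff _ n (qseq n) L).mp (hL n)
      refine ⟨mseq n + f y, ?_⟩
      rw [smul_add, ← hq n, ← map_smul, hy, map_sub]
      abel
    exact (sub_eq_zero.mp hzero).symm
  have hbij : Function.Bijective f := by
    constructor
    · intro p q hpq
      rw [← sub_eq_zero]
      apply hinj
      rw [map_sub, hpq, sub_self]
    · exact hsurj
  refine ⟨LinearEquiv.ofBijective f hbij, fun p => ?_⟩
  exact hfp p

end Key

section Fwd

variable {A : Type*} [CommRing A] {M : Type*} [AddCommGroup M]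
    [Module A M] [Module (PowerSeries A) M] [IsScalarTower A (PowerSeries A) M]

set_option linter.unusedSectionVars false
set_option maxHeartbeats 1000000

/-- The constant coefficient as an `A`-linear map. -/
noncomputable def ccl (A : Type*) [CommRing A] : PowerSeries A →ₗ[A] A where
  toFun := PowerSeries.constantCoeff (R := A)
  map_add' := fun a b => map_add _ a b
  map_smul' := fun a f => by
    simp [Algebra.smul_def, psalgebraMap, map_mul, PowerSeries.constantCoeff_C, smul_eq_mul]

lemma forward [hfin : Module.Finite (PowerSeries A) M]
    [hproj : Module.Projective (PowerSeries A) M] :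
    (∀ m : M, (PowerSeries.X : PowerSeries A) • m = 0 → m = 0) ∧
      IsAdicComplete (Ideal.span {(PowerSeries.X : PowerSeries A)}) M ∧
      Module.Finite A (M ⧸ uSub A M) ∧ Module.Projective A (M ⧸ uSub A M) := by
  obtain ⟨k, i, r, hri⟩ := exists_retract (PowerSeries A) M
  have hQtf : ∀ w : Fin k → PowerSeries A, (PowerSeries.X : PowerSeries A) • w = 0 → w = 0 := by
    intro w hw
    funext j
    exact X_mul_cancel (congrFun hw j)
  have htf : ∀ m : M, (PowerSeries.X : PowerSeries A) • m = 0 → m = 0 := by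
    intro m hm
    have h1 : i m = 0 := hQtf _ (by rw [← map_smul, hm, map_zero])
    rw [← hri m, h1, map_zero]
  haveI hQc : IsAdicComplete (Ideal.span {(PowerSeries.X : PowerSeries A)})
      (Fin k → PowerSeries A) := isAdicComplete_pi (M := PowerSeries A) _ k
  have hcomp := isAdicComplete_of_retract (PowerSeries.X : PowerSeries A) i r hri
  set cc : (Fin k → PowerSeries A) →ₗ[A] (Fin k → A) :=
    LinearMap.pi (fun j => (ccl A).comp (LinearMap.proj j)) with hcc
  set c : (Fin k → A) →ₗ[A] (Fin k → PowerSeries A) :=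
    LinearMap.pi (fun j => (Algebra.linearMap A (PowerSeries A)).comp (LinearMap.proj j)) with hc
  set π : M →ₗ[PowerSeries A] (M ⧸ uSub A M) := (uSub A M).mkQ with hπ
  set τ : (Fin k → A) →ₗ[A] (M ⧸ uSub A M) :=
    ((π.restrictScalars A).comp ((r.restrictScalars A).comp c)) with hτ
  have hτc : ∀ m : M, τ (cc (i m)) = π m := by
    intro m
    have hd : ∀ j : Fin k, ∃ h : PowerSeries A, PowerSeries.X * h
        = i m j - c (cc (i m)) j := by
      intro j
      have : (PowerSeries.X : PowerSeries A) ∣ i m j - c (cc (i m)) j := by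
        rw [PowerSeries.X_dvd_iff, map_sub]
        simp [hc, hcc, psalgebraMap, ccl, PowerSeries.constantCoeff_C]
      obtain ⟨h, hh⟩ := this
      exact ⟨h, hh.symm⟩
    choose w hw using hd
    have hdw : i m - c (cc (i m)) = (PowerSeries.X : PowerSeries A) • w := by
      funext j
      rw [Pi.sub_apply, ← hw j]
      rfl
    have h1 : τ (cc (i m)) = π (r (c (cc (i m)))) := rfl
    have h2 : r (c (cc (i m))) = m - (PowerSeries.X : PowerSeries A) • r w := by
      have h := congrArg r hdw
      rw [map_sub, map_smul, hri] at h
      rw [sub_eq_iff_eq_add] at h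
      conv_rhs => rw [h]
      abel
    rw [h1, h2, map_sub]
    have h3 : π ((PowerSeries.X : PowerSeries A) • r w) = 0 := by
      rw [hπ, Submodule.mkQ_apply, Submodule.Quotient.mk_eq_zero]
      exact (mem_uSub_iff _).mpr ⟨r w, rfl⟩
    rw [h3, sub_zero]
  have hτs : Function.Surjective τ := by
    intro n
    obtain ⟨m, rfl⟩ := Submodule.mkQ_surjective (uSub A M) n
    exact ⟨cc (i m), hτc m⟩
  have hFin : Module.Finite A (M ⧸ uSub A M) := Module.Finite.of_surjective τ hτs
  set s₀ : M →ₗ[A] (Fin k → A) := cc.comp (i.restrictScalars A) with hs₀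
  have hker : (uSub A M).restrictScalars A ≤ LinearMap.ker s₀ := by
    intro m hm
    obtain ⟨y, rfl⟩ := (mem_uSub_iff m).mp hm
    rw [LinearMap.mem_ker, hs₀]
    funext j
    have : i ((PowerSeries.X : PowerSeries A) • y) = PowerSeries.X • i y := map_smul i _ _
    simp only [LinearMap.comp_apply, LinearMap.coe_restrictScalars, this, hcc,
      LinearMap.pi_apply, LinearMap.proj_apply, Pi.smul_apply, smul_eq_mul]
    show PowerSeries.constantCoeff (PowerSeries.X * i y j) = 0
    rw [map_mul, PowerSeries.constantCoeff_X, zero_mul]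
  set sbar : (M ⧸ uSub A M) →ₗ[A] (Fin k → A) :=
    (Submodule.liftQ _ s₀ hker).comp
      (Submodule.Quotient.restrictScalarsEquiv A (uSub A M)).symm.toLinearMap with hsbar
  have hsplit : τ.comp sbar = LinearMap.id := by
    apply LinearMap.ext
    intro n
    obtain ⟨m, rfl⟩ := Submodule.Quotient.mk_surjective (uSub A M) n
    have h1 : sbar (Submodule.Quotient.mk m) = cc (i m) := by
      rw [hsbar, LinearMap.comp_apply, LinearEquiv.coe_toLinearMap,
        Submodule.Quotient.restrictScalarsEquiv_symm_mk, Submodule.liftQ_apply]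
      rfl
    rw [LinearMap.comp_apply, h1, LinearMap.id_apply]
    exact hτc m
  have hProj : Module.Projective A (M ⧸ uSub A M) :=
    Module.Projective.of_split sbar τ hsplit
  exact ⟨htf, hcomp, hFin, hProj⟩

end Fwd

set_option maxHeartbeats 1000000 in
/-- An `A[[u]]`-module `𝔐` is finitely generated projective iff it is
`u`-torsion free, `u`-adically complete and separated, and `𝔐/u𝔐` is a finitely generated
projective `A`-module; moreover, in that case there is an `A[[u]]`-linear isomorphism
`A[[u]] ⊗_A (𝔐/u𝔐) ≅ 𝔐` reducing to the identity modulo `u`. -/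
theorem stmt2 {A : Type*} [CommRing A] {M : Type*} [AddCommGroup M]
    [Module A M] [Module (PowerSeries A) M] [IsScalarTower A (PowerSeries A) M] :
    ((Module.Finite (PowerSeries A) M ∧ Module.Projective (PowerSeries A) M) ↔
      ((∀ m : M, (PowerSeries.X : PowerSeries A) • m = 0 → m = 0) ∧
        IsAdicComplete (Ideal.span {(PowerSeries.X : PowerSeries A)}) M ∧
        Module.Finite A (M ⧸ uSub A M) ∧ Module.Projective A (M ⧸ uSub A M))) ∧
    (Module.Finite (PowerSeries A) M → Module.Projective (PowerSeries A) M →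
      ∃ e : (TensorProduct A (PowerSeries A) (M ⧸ uSub A M)) ≃ₗ[PowerSeries A] M,
        ∀ m : M,
          (Submodule.Quotient.mk (e ((1 : PowerSeries A) ⊗ₜ[A] Submodule.Quotient.mk m))
              : M ⧸ uSub A M) =
            Submodule.Quotient.mk m) := by
  constructor
  · constructor
    · rintro ⟨hfin, hproj⟩
      exact forward
    · rintro ⟨htf, hcomp, hfinN, hprojN⟩
      obtain ⟨e, he⟩ := key htf hcomp hfinN hprojN
      haveI := hfinN
      haveI := hprojN
      haveI : Module.Finite (PowerSeries A) (TensorProduct A (PowerSeries A) (M ⧸ uSub A M)) :=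
        inferInstance
      haveI : Module.Projective (PowerSeries A)
          (TensorProduct A (PowerSeries A) (M ⧸ uSub A M)) := inferInstance
      exact ⟨Module.Finite.equiv e, Module.Projective.of_equiv e⟩
  · intro hfin hproj
    obtain ⟨htf, hcomp, hfinN, hprojN⟩ := forward (A := A) (M := M)
    obtain ⟨e, he⟩ := key htf hcomp hfinN hprojN
    refine ⟨e, fun m => ?_⟩
    rw [he ((1 : PowerSeries A) ⊗ₜ[A] Submodule.Quotient.mk m),
      LinearMap.liftBaseChange_tmul, LinearMap.id_apply, one_smul]
end

section
/- Let A be a Noetherian local domain and f a nonzero non-unit element of A which is contained in every nonzero prime ideal of A. Then A is one-dimensional. -/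
open IsLocalRing

/-- A finitely generated module over a Noetherian ring, killed by a maximal ideal,
is Artinian. -/
lemma art_aux {R : Type u} [CommRing R] [IsNoetherianRing R] {M : Ideal R} (hM : M.IsMaximal)
    {V : Type v} [AddCommGroup V] [Module R V] [Module.Finite R V]
    (h : M • (⊤ : Submodule R V) = ⊥) : IsArtinian R V := by
  have htor : Module.IsTorsionBySet R V (M : Set R) := by
    intro v a
    have : (a : R) • v ∈ M • (⊤ : Submodule R V) :=
      Submodule.smul_mem_smul a.2 Submodule.mem_top
    rw [h] at this
    simpa using this
  letI : Module (R ⧸ M) V := htor.module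
  haveI : IsScalarTower R (R ⧸ M) V := htor.isScalarTower
  haveI : Module.Finite (R ⧸ M) V := by
    obtain ⟨s, hs⟩ := (Module.Finite.fg_top (R := R) (M := V))
    refine ⟨⟨s, eq_top_iff.mpr fun x _ => ?_⟩⟩
    have hx : x ∈ Submodule.span R (s : Set V) := by rw [hs]; trivial
    exact Submodule.span_le_restrictScalars R (R ⧸ M) (s : Set V) hx
  letI : Field (R ⧸ M) := Ideal.Quotient.field M
  haveI hart : IsArtinian (R ⧸ M) V := isArtinian_of_fg_of_artinian'
  -- transfer Artinian-ness back along the surjection `R → R ⧸ M`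
  let toQuot : Submodule R V → Submodule (R ⧸ M) V := fun S =>
    { carrier := S
      add_mem' := fun ha hb => S.add_mem ha hb
      zero_mem' := S.zero_mem
      smul_mem' := by
        rintro c v hv
        obtain ⟨r, rfl⟩ := Ideal.Quotient.mk_surjective c
        have : (Ideal.Quotient.mk M r) • v = r • v := htor.mk_smul r v
        rw [this]
        exact S.smul_mem r hv }
  have hmono : ∀ {a b : Submodule R V}, toQuot a ≤ toQuot b ↔ a ≤ b := by
    intro a b
    constructor
    · intro hab x hx
      exact hab hx
    · intro hab x hx
      exact hab hx
  let emb : Submodule R V ↪o Submodule (R ⧸ M) V :=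
    { toFun := toQuot
      inj' := by
        intro a b hab
        apply SetLike.coe_injective
        have : (toQuot a : Set V) = (toQuot b : Set V) := by rw [hab]
        exact this
      map_rel_iff' := hmono }
  exact ⟨emb.ltEmbedding.wellFounded wellFounded_lt⟩

/-- A finitely generated module over a Noetherian ring, killed by a power of a
maximal ideal, is Artinian. -/
lemma art {R : Type u} [CommRing R] [IsNoetherianRing R] {M : Ideal R} (hM : M.IsMaximal)
    (N : ℕ) :
    ∀ {V : Type u} [AddCommGroup V] [Module R V] [Module.Finite R V],
      M ^ N • (⊤ : Submodule R V) = ⊥ → IsArtinian R V := by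
  induction N with
  | zero =>
    intro V _ _ _ h
    rw [pow_zero, Ideal.one_eq_top, Submodule.top_smul] at h
    haveI : Subsingleton V := by
      constructor
      intro a b
      have ha : a ∈ (⊥ : Submodule R V) := h ▸ Submodule.mem_top
      have hb : b ∈ (⊥ : Submodule R V) := h ▸ Submodule.mem_top
      simp only [Submodule.mem_bot] at ha hb
      rw [ha, hb]
    infer_instance
  | succ N ih =>
    intro V _ _ _ h
    set S : Submodule R V := M ^ N • ⊤ with hS
    haveI : IsNoetherian R V := isNoetherian_of_isNoetherianRing_of_finite R V
    -- the quotient V ⧸ S is killed by M ^ N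
    haveI hQ : IsArtinian R (V ⧸ S) := by
      apply ih
      rw [eq_bot_iff]
      have : (⊤ : Submodule R (V ⧸ S)) = Submodule.map S.mkQ ⊤ := by
        rw [Submodule.map_top, Submodule.range_mkQ]
      rw [this, ← Submodule.map_smul'']
      intro x hx
      obtain ⟨y, hy, rfl⟩ := hx
      have : y ∈ S := by rw [hS]; exact hy
      simpa [Submodule.mem_bot] using (Submodule.Quotient.mk_eq_zero S).mpr this
    -- S is killed by M
    have hMS : M • S = ⊥ := by
      rw [hS, ← Submodule.smul_assoc, Ideal.smul_eq_mul, ← pow_succ']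
      exact h
    haveI : Module.Finite R S := Module.Finite.iff_fg.mpr (IsNoetherian.noetherian S)
    haveI hSart : IsArtinian R S := by
      apply art_aux hM
      rw [eq_bot_iff]
      rw [Submodule.smul_le]
      intro r hr n _
      have : r • (n : V) ∈ M • S := Submodule.smul_mem_smul hr n.2
      rw [hMS] at this
      simp only [Submodule.mem_bot] at this ⊢
      exact Subtype.ext (by simpa using this)
    exact isArtinian_of_range_eq_ker S.subtype S.mkQ
      (by rw [Submodule.range_subtype, Submodule.ker_mkQ])

/-- Krull's principal ideal theorem, in the special case of a Noetherian local domain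
whose maximal ideal is the unique prime containing the element `x`. -/
lemma pit1 {B : Type u} [CommRing B] [IsDomain B] [IsNoetherianRing B] [IsLocalRing B]
    {x : B} (hx0 : x ≠ 0) (hxm : x ∈ maximalIdeal B)
    (hx : ∀ Q : Ideal B, Q.IsPrime → x ∈ Q → Q = maximalIdeal B)
    {p : Ideal B} (hp : p.IsPrime) (hpm : p ≠ maximalIdeal B) : p = ⊥ := by
  haveI := hp
  have hxp : x ∉ p := fun h => hpm (hx p hp h)
  -- the radical of (x) is the maximal ideal
  have hrad : (Ideal.span {x}).radical = maximalIdeal B := by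
    rw [Ideal.radical_eq_sInf]
    apply le_antisymm
    · exact sInf_le ⟨(Ideal.span_le).mpr (by simpa using hxm),
        (maximalIdeal.isMaximal B).isPrime⟩
    · refine le_sInf fun J hJ => ?_
      have := hx J hJ.2 (hJ.1 (Ideal.subset_span rfl))
      rw [this]
  obtain ⟨N, hN⟩ : ∃ N, maximalIdeal B ^ N ≤ Ideal.span {x} := by
    obtain ⟨n, hn⟩ := Ideal.exists_radical_pow_le_of_fg (Ideal.span {x})
      (IsNoetherian.noetherian _)
    exact ⟨n, by rwa [hrad] at hn⟩
  -- localization at p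
  set L := Localization.AtPrime p with hL
  set φ := algebraMap B L with hφ
  haveI : IsNoetherianRing L := IsLocalization.isNoetherianRing p.primeCompl L ‹_›
  have hφinj : Function.Injective φ := IsLocalization.injective L p.primeCompl_le_nonZeroDivisors
  -- symbolic powers
  set P : ℕ → Ideal B := fun n => (Ideal.map φ p ^ n).comap φ with hP
  have hPanti : ∀ n, P (n + 1) ≤ P n := fun n =>
    Ideal.comap_mono (Ideal.pow_le_pow_right (Nat.le_succ n))
  have hsat : ∀ n c, c * x ∈ P n → c ∈ P n := by
    intro n c hc
    have hu : IsUnit (φ x) := IsLocalization.map_units L (⟨x, hxp⟩ : p.primeCompl)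
    have hc' : φ c * φ x ∈ Ideal.map φ p ^ n := by
      rw [← map_mul]; exact hc
    have : φ c = φ c * φ x * ↑hu.unit⁻¹ := by
      rw [mul_assoc, IsUnit.mul_val_inv, mul_one]
    have hm : φ c * φ x * ↑hu.unit⁻¹ ∈ Ideal.map φ p ^ n :=
      Ideal.mul_mem_right _ _ hc'
    rw [← this] at hm
    exact hm
  -- the quotient module B ⧸ (x) is Artinian
  haveI hart : IsArtinian B (B ⧸ (Ideal.span {x} : Ideal B)) := by
    apply art (maximalIdeal.isMaximal B) N
    rw [eq_bot_iff, Submodule.smul_le]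
    intro r hr v _
    obtain ⟨b, rfl⟩ := Submodule.Quotient.mk_surjective _ v
    have : r • b ∈ Ideal.span {x} := by
      have : r ∈ Ideal.span {x} := hN hr
      simpa [smul_eq_mul] using Ideal.mul_mem_right b _ this
    rw [← Submodule.Quotient.mk_smul]
    simpa [Submodule.mem_bot] using (Submodule.Quotient.mk_eq_zero _).mpr this
  -- the chain P n + (x) stabilizes
  set I₀ : Ideal B := Ideal.span {x} with hI₀
  have hPmono : ∀ a b : ℕ, a ≤ b → P b ≤ P a := fun a b hab =>
    Ideal.comap_mono (Ideal.pow_le_pow_right hab)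
  set c : ℕ →o (Submodule B (B ⧸ (I₀ : Ideal B)))ᵒᵈ :=
    ⟨fun n => Submodule.map I₀.mkQ (P n), fun a b hab => Submodule.map_mono (hPmono a b hab)⟩
      with hc
  obtain ⟨n₀, hn₀⟩ := IsArtinian.monotone_stabilizes c
  -- deduce P n = P (n+1) for n ≥ n₀ via Nakayama
  have hsup : ∀ n, n₀ ≤ n → P n ⊔ I₀ = P n₀ ⊔ I₀ := by
    intro n hn
    have hmm : Submodule.map I₀.mkQ (P n₀) = Submodule.map I₀.mkQ (P n) := hn₀ n hn
    have h2 := congrArg (Submodule.comap I₀.mkQ) hmm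
    rw [Submodule.comap_map_mkQ, Submodule.comap_map_mkQ] at h2
    rw [sup_comm, ← h2, sup_comm]
  have hstep : ∀ n, n₀ ≤ n → P n = P (n + 1) := by
    intro n hn
    have hins : P n ≤ P (n + 1) ⊔ I₀ • P n := by
      intro a ha
      have ha' : a ∈ P (n + 1) ⊔ I₀ := by
        rw [hsup (n + 1) (le_trans hn (Nat.le_succ n)), ← hsup n hn]
        exact Submodule.mem_sup_left ha
      obtain ⟨b, hb, ct, hct, rfl⟩ := Submodule.mem_sup.mp ha'
      obtain ⟨d, hd⟩ := Ideal.mem_span_singleton'.mp hct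
      have hdx : d * x ∈ P n := by
        have : ct = (b + ct) - b := by ring
        rw [hd]
        rw [this]
        exact Submodule.sub_mem _ ha (hPanti n hb)
      have hdP : d ∈ P n := hsat n d hdx
      refine Submodule.add_mem _ (Submodule.mem_sup_left hb) (Submodule.mem_sup_right ?_)
      rw [← hd]
      have : d * x = x • d := by rw [smul_eq_mul]; ring
      rw [this]
      exact Submodule.smul_mem_smul (Ideal.subset_span rfl) hdP
    -- Nakayama
    have hjac : I₀ ≤ Ideal.jacobson ⊥ := by
      rw [jacobson_eq_maximalIdeal ⊥ bot_ne_top]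
      exact (Ideal.span_le).mpr (by simpa using hxm)
    have := Submodule.sup_eq_sup_smul_of_le_smul_of_le_jacobson
      (I := I₀) (J := ⊥) (N := P (n + 1)) (N' := P n)
      (IsNoetherian.noetherian _) (by simpa using hjac) hins
    rw [Submodule.bot_smul, sup_bot_eq] at this
    have h3 : P (n + 1) ⊔ P n = P (n + 1) := this
    refine le_antisymm ?_ (hPanti n)
    intro a ha
    rw [← h3]
    exact Submodule.mem_sup_right ha
  have hconst : ∀ k, P (n₀ + k) = P n₀ := by
    intro k
    induction k with
    | zero => rfl
    | succ k ih =>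
      have : n₀ + (k + 1) = (n₀ + k) + 1 := rfl
      rw [this, ← hstep (n₀ + k) (Nat.le_add_right n₀ k), ih]
  -- transfer to the localization
  have hmapP : ∀ n, Ideal.map φ (P n) = Ideal.map φ p ^ n := fun n =>
    IsLocalization.map_comap p.primeCompl L (Ideal.map φ p ^ n)
  have hJconst : ∀ k, Ideal.map φ p ^ (n₀ + k) = Ideal.map φ p ^ n₀ := by
    intro k
    rw [← hmapP, ← hmapP, hconst k]
  have hJne : Ideal.map φ p ≠ ⊤ := by
    rw [Localization.AtPrime.map_eq_maximalIdeal]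
    exact (maximalIdeal.isMaximal L).ne_top
  have hKrull : (⨅ n : ℕ, Ideal.map φ p ^ n) = ⊥ :=
    Ideal.iInf_pow_eq_bot_of_isLocalRing (Ideal.map φ p) hJne
  have hbot : Ideal.map φ p ^ n₀ = ⊥ := by
    rw [← hKrull]
    apply le_antisymm
    · refine le_iInf fun n => ?_
      rcases le_total n n₀ with h | h
      · exact Ideal.pow_le_pow_right h
      · obtain ⟨k, rfl⟩ := Nat.exists_eq_add_of_le h
        rw [hJconst k]
    · exact iInf_le _ n₀
  -- conclude p = ⊥
  by_contra hpbot
  obtain ⟨z, hzp, hz0⟩ := Submodule.exists_mem_ne_zero_of_ne_bot hpbot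
  have : φ z ^ (n₀ + 1) ∈ Ideal.map φ p ^ (n₀ + 1) :=
    Ideal.pow_mem_pow (Ideal.mem_map_of_mem φ hzp) _
  rw [hJconst 1, hbot] at this
  · simp only [Ideal.mem_bot] at this
    have : φ (z ^ (n₀ + 1)) = 0 := by rw [map_pow]; exact this
    have hz : z ^ (n₀ + 1) = 0 := hφinj (by rw [this, map_zero])
    exact hz0 (pow_eq_zero_iff (Nat.succ_ne_zero n₀) |>.mp hz)

/-- A Noetherian local domain containing a nonzero non-unit `f` lying in
every nonzero prime ideal is one-dimensional. -/
theorem stmt16 {A : Type*} [CommRing A] [IsDomain A] [IsNoetherianRing A] [IsLocalRing A]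
    (f : A) (hf0 : f ≠ 0) (hfu : ¬ IsUnit f)
    (hf : ∀ P : Ideal A, P.IsPrime → P ≠ ⊥ → f ∈ P) :
    ringKrullDim A = 1 := by
  classical
  have hfm : f ∈ maximalIdeal A := (mem_maximalIdeal f).mpr hfu
  have hmbot : maximalIdeal A ≠ ⊥ := by
    intro h
    rw [h] at hfm
    exact hf0 (Submodule.mem_bot A |>.mp hfm)
  haveI hmprime : (maximalIdeal A).IsPrime := (maximalIdeal.isMaximal A).isPrime
  -- every minimal prime over (f) equals the maximal ideal
  have hMinF : ∀ p ∈ (Ideal.span {f} : Ideal A).minimalPrimes, p = maximalIdeal A := by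
    by_contra hcon
    push_neg at hcon
    obtain ⟨p₀, hp₀mem, hp₀ne⟩ := hcon
    have hmnot : maximalIdeal A ∉ (Ideal.span {f} : Ideal A).minimalPrimes := by
      intro hmm
      have h1 : p₀ ≤ maximalIdeal A := le_maximalIdeal hp₀mem.1.1.ne_top
      have h2 := hmm.2 ⟨hp₀mem.1.1, hp₀mem.1.2⟩ h1
      exact hp₀ne (le_antisymm h1 h2)
    have hfin : (Ideal.span {f} : Ideal A).minimalPrimes.Finite := by
      rw [Ideal.minimalPrimes_eq_comap]
      exact (minimalPrimes.finite_of_isNoetherianRing _).image _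
    have hnsub : ¬ ((maximalIdeal A : Set A) ⊆
        ⋃ p ∈ (hfin.toFinset : Set (Ideal A)), (p : Set A)) := by
      intro hsub
      obtain ⟨p, hps, hmp⟩ := (Ideal.subset_union_prime p₀ p₀
        (fun i hi _ _ => (hfin.mem_toFinset.mp hi).1.1)).mp hsub
      have hpm : p ∈ (Ideal.span {f} : Ideal A).minimalPrimes := hfin.mem_toFinset.mp hps
      have : p = maximalIdeal A := le_antisymm (le_maximalIdeal hpm.1.1.ne_top) hmp
      exact hmnot (this ▸ hpm)
    obtain ⟨x, hxm, hxnot⟩ : ∃ x ∈ maximalIdeal A,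
        ∀ p ∈ (Ideal.span {f} : Ideal A).minimalPrimes, x ∉ p := by
      rw [Set.not_subset] at hnsub
      obtain ⟨x, hx1, hx2⟩ := hnsub
      refine ⟨x, hx1, fun p hp hxp => hx2 ?_⟩
      exact Set.mem_biUnion (hfin.mem_toFinset.mpr hp) hxp
    have hx0 : x ≠ 0 := fun h => hxnot p₀ hp₀mem (h ▸ p₀.zero_mem)
    -- a minimal prime `q` over (x)
    obtain ⟨q, hq, hqm⟩ := Ideal.exists_minimalPrimes_le
      (I := Ideal.span {x}) (J := maximalIdeal A) (Ideal.span_le.mpr (by simpa using hxm))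
    have hqprime : q.IsPrime := hq.1.1
    have hxq : x ∈ q := hq.1.2 (Ideal.subset_span rfl)
    have hqbot : q ≠ ⊥ := by
      intro h
      rw [h] at hxq
      exact hx0 (Submodule.mem_bot A |>.mp hxq)
    have hfq : f ∈ q := hf q hqprime hqbot
    haveI := hqprime
    obtain ⟨p, hpMinF, hpq⟩ := Ideal.exists_minimalPrimes_le
      (I := Ideal.span {f}) (J := q) (Ideal.span_le.mpr (by simpa using hfq))
    have hpprime : p.IsPrime := hpMinF.1.1
    have hppbot : p ≠ ⊥ := by
      intro h
      have : f ∈ p := hpMinF.1.2 (Ideal.subset_span rfl)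
      rw [h] at this
      exact hf0 (Submodule.mem_bot A |>.mp this)
    have hxp : x ∉ p := hxnot p hpMinF
    -- localize at q and apply the principal ideal theorem
    set B := Localization.AtPrime q with hB
    set φ := algebraMap A B with hφ
    haveI : IsNoetherianRing B := IsLocalization.isNoetherianRing q.primeCompl B ‹_›
    have hφinj : Function.Injective φ :=
      IsLocalization.injective B q.primeCompl_le_nonZeroDivisors
    have hmax : Ideal.map φ q = maximalIdeal B := Localization.AtPrime.map_eq_maximalIdeal
    have hBx0 : φ x ≠ 0 := fun h => hx0 (hφinj (by rw [h, map_zero]))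
    have hBxm : φ x ∈ maximalIdeal B := hmax ▸ Ideal.mem_map_of_mem φ hxq
    have hXonly : ∀ Q : Ideal B, Q.IsPrime → φ x ∈ Q → Q = maximalIdeal B := by
      intro Q hQ hxQ
      haveI := hQ
      have hcle : Ideal.comap φ Q ≤ q := by
        intro a ha
        by_contra hanq
        exact hQ.ne_top (Q.eq_top_of_isUnit_mem ha
          (IsLocalization.map_units B (⟨a, hanq⟩ : q.primeCompl)))
      have hcq : Ideal.comap φ Q = q := by
        refine le_antisymm hcle (hq.2 ⟨Ideal.IsPrime.comap φ, ?_⟩ hcle)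
        exact Ideal.span_le.mpr (by simpa using (Ideal.mem_comap.mpr hxQ))
      rw [← IsLocalization.map_comap q.primeCompl B Q]
      show Ideal.map φ (Ideal.comap φ Q) = _
      rw [hcq, hmax]
    have hdisj : Disjoint (q.primeCompl : Set A) (p : Set A) :=
      Set.disjoint_left.mpr fun a ha hap => ha (hpq hap)
    have hp' : (Ideal.map φ p).IsPrime :=
      IsLocalization.isPrime_of_isPrime_disjoint q.primeCompl B p hpprime hdisj
    have hcomapp : Ideal.comap φ (Ideal.map φ p) = p :=
      IsLocalization.comap_map_of_isPrime_disjoint q.primeCompl B hpprime hdisj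
    have hp'bot : Ideal.map φ p ≠ ⊥ := by
      obtain ⟨z, hzp, hz0⟩ := Submodule.exists_mem_ne_zero_of_ne_bot hppbot
      intro h
      have h2 : φ z ∈ (⊥ : Ideal B) := h ▸ Ideal.mem_map_of_mem φ hzp
      have h3 : φ z = 0 := Submodule.mem_bot B |>.mp h2
      exact hz0 (hφinj (by rw [h3, map_zero]))
    have hp'max : Ideal.map φ p ≠ maximalIdeal B := by
      intro h
      have hpq' : p = q := by
        rw [← hcomapp, h]
        exact Localization.AtPrime.comap_maximalIdeal
      exact hxp (hpq' ▸ hxq)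
    exact hp'bot (pit1 hBx0 hBxm hXonly hp' hp'max)
  -- classification of all primes
  have hclass : ∀ P : Ideal A, P.IsPrime → P = ⊥ ∨ P = maximalIdeal A := by
    intro P hP
    by_cases hPb : P = ⊥
    · exact Or.inl hPb
    · right
      haveI := hP
      have hfP : f ∈ P := hf P hP hPb
      obtain ⟨p, hpM, hpP⟩ := Ideal.exists_minimalPrimes_le
        (I := Ideal.span {f}) (J := P) (Ideal.span_le.mpr (by simpa using hfP))
      rw [hMinF p hpM] at hpP
      exact le_antisymm (le_maximalIdeal hP.ne_top) hpP
  -- compute the Krull dimension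
  let pb : PrimeSpectrum A := ⟨⊥, Ideal.bot_prime⟩
  let pm : PrimeSpectrum A := ⟨maximalIdeal A, hmprime⟩
  have hlt : pb < pm := by
    rw [← PrimeSpectrum.asIdeal_lt_asIdeal]
    exact lt_of_le_of_ne bot_le (Ne.symm hmbot)
  have hall : ∀ Q : PrimeSpectrum A, Q = pb ∨ Q = pm := by
    intro Q
    rcases hclass Q.asIdeal Q.isPrime with h | h
    · exact Or.inl (PrimeSpectrum.ext h)
    · exact Or.inr (PrimeSpectrum.ext h)
  show Order.krullDim (PrimeSpectrum A) = 1
  haveI : Nonempty (PrimeSpectrum A) := ⟨pb⟩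
  apply le_antisymm
  · rw [Order.krullDim_eq_iSup_length]
    have hsup : (⨆ (s : LTSeries (PrimeSpectrum A)), (s.length : ℕ∞)) ≤ 1 := by
      refine iSup_le fun s => ?_
      have hlen : s.length ≤ 1 := by
        by_contra hlen
        push_neg at hlen
        have h0 : (0 : Fin (s.length + 1)) < ⟨1, by omega⟩ := by
          simp [Fin.lt_def]
        have h1 : (⟨1, by omega⟩ : Fin (s.length + 1)) < ⟨2, by omega⟩ := by
          simp [Fin.lt_def]
        have hs0 : s.toFun 0 < s.toFun ⟨1, by omega⟩ := s.strictMono h0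
        have hs1 : s.toFun ⟨1, by omega⟩ < s.toFun ⟨2, by omega⟩ := s.strictMono h1
        rcases hall (s.toFun ⟨1, by omega⟩) with h | h
        · rw [h] at hs0
          have : (s.toFun 0).asIdeal < ⊥ :=
            (PrimeSpectrum.asIdeal_lt_asIdeal _ _).mpr hs0
          exact absurd this (by simp)
        · rw [h] at hs1
          rcases hall (s.toFun ⟨2, by omega⟩) with h2 | h2
          · rw [h2] at hs1
            have : (maximalIdeal A : Ideal A) < ⊥ :=
              (PrimeSpectrum.asIdeal_lt_asIdeal _ _).mpr hs1
            exact absurd this (by simp)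
          · rw [h2] at hs1
            exact lt_irrefl _ hs1
      exact_mod_cast hlen
    exact_mod_cast hsup
  · have hc : ∀ i : Fin 1, (![pb, pm] : Fin 2 → PrimeSpectrum A) i.castSucc <
        ![pb, pm] i.succ := by
      intro i
      fin_cases i
      simpa using hlt
    have := Order.LTSeries.length_le_krullDim (⟨1, ![pb, pm], hc⟩ : LTSeries (PrimeSpectrum A))
    exact_mod_cast this
end

section
/- Let A be a discrete valuation ring with fraction field K, and let A'_K be an Artinian local ring equipped with a surjection A'_K → K. Let A' be the preimage of A under this surjection. Then A' is a subring of A'_K, the induced map A' → A is a surjective ring homomorphism with nilpotent kernel, and Spec A' is the pushout of Spec A and Spec A'_K along Spec K (i.e. A' = A ×_K A'_K as rings). -/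
/-- Let `A` be a DVR with fraction field `K`, and `R` an Artinian local ring
with a surjection `π : R →+* K`.  Let `A'` be the preimage of `A` in `R` (a subring of `R`).
Then the induced map `A' → A` is a surjective ring homomorphism with nilpotent kernel, and
`A'` is the fibre product `A ×_K R`: the map `A' → A × R` is injective with image exactly
the pairs having equal image in `K`. -/
theorem stmt18 {A K R : Type*} [CommRing A] [IsDomain A] [IsDiscreteValuationRing A]
    [Field K] [Algebra A K] [IsFractionRing A K]
    [CommRing R] [IsArtinianRing R] [IsLocalRing R]
    (π : R →+* K) (hπ : Function.Surjective π) :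
    ∃ φ : ((algebraMap A K).range.comap π : Subring R) →+* A,
      (∀ x : ((algebraMap A K).range.comap π : Subring R), algebraMap A K (φ x) = π x) ∧
      Function.Surjective φ ∧
      IsNilpotent (RingHom.ker φ) ∧
      Function.Injective
        (fun x : ((algebraMap A K).range.comap π : Subring R) => ((φ x, (x : R)) : A × R)) ∧
      Set.range
          (fun x : ((algebraMap A K).range.comap π : Subring R) => ((φ x, (x : R)) : A × R)) =
        {y : A × R | algebraMap A K y.1 = π y.2} := by
  set A' : Subring R := (algebraMap A K).range.comap π with hA'
  have hinj : Function.Injective (algebraMap A K) := IsFractionRing.injective A K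
  -- the equivalence A ≃ range of algebraMap
  let e : A ≃+* (algebraMap A K).range :=
    RingEquiv.ofLeftInverse (g := Function.invFun (algebraMap A K))
      (Function.leftInverse_invFun hinj)
  -- map A' → range
  let g : A' →+* (algebraMap A K).range :=
    (π.comp A'.subtype).codRestrict _ (fun x => x.2)
  let φ : A' →+* A := e.symm.toRingHom.comp g
  have hcomm : ∀ x : A', algebraMap A K (φ x) = π x := by
    intro x
    have : (e (φ x) : K) = (g x : K) := by
      simp only [φ, RingHom.comp_apply, RingEquiv.toRingHom_eq_coe, RingEquiv.coe_toRingHom,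
        RingEquiv.apply_symm_apply]
    have he : ∀ a : A, (e a : K) = algebraMap A K a := fun a => rfl
    rw [he] at this
    exact this
  have hunique : ∀ (x : A') (a : A), algebraMap A K a = π x → φ x = a := by
    intro x a h
    apply hinj
    rw [hcomm x, h]
  refine ⟨φ, hcomm, ?_, ?_, ?_, ?_⟩
  · -- surjective
    intro a
    obtain ⟨r, hr⟩ := hπ (algebraMap A K a)
    refine ⟨⟨r, by simp [hA', hr]⟩, hunique _ _ hr.symm⟩
  · -- nilpotent kernel
    have hker : RingHom.ker π = IsLocalRing.maximalIdeal R :=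
      IsLocalRing.eq_maximalIdeal (RingHom.ker_isMaximal_of_surjective π hπ)
    have hnil : IsNilpotent (RingHom.ker π) := by
      rw [hker, ← IsLocalRing.jacobson_eq_maximalIdeal (⊥ : Ideal R) bot_ne_top]
      exact IsArtinianRing.isNilpotent_jacobson_bot
    obtain ⟨n, hn⟩ := hnil
    refine ⟨n, ?_⟩
    have hmap : Ideal.map A'.subtype (RingHom.ker φ) ≤ RingHom.ker π := by
      rw [Ideal.map_le_iff_le_comap]
      intro x hx
      have hx' : φ x = 0 := hx
      have := hcomm x
      rw [hx'] at this
      simp only [map_zero] at this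
      simpa [RingHom.mem_ker] using this.symm
    have hle : Ideal.map A'.subtype ((RingHom.ker φ) ^ n) ≤ (RingHom.ker π) ^ n := by
      rw [Ideal.map_pow]
      exact Ideal.pow_right_mono hmap n
    rw [hn] at hle
    ext x
    simp only [Ideal.zero_eq_bot, Ideal.mem_bot]
    constructor
    · intro hx
      have : A'.subtype x ∈ Ideal.map A'.subtype ((RingHom.ker φ) ^ n) :=
        Ideal.mem_map_of_mem _ hx
      have h0 : A'.subtype x = 0 := by simpa [Ideal.zero_eq_bot] using hle this
      exact Subtype.ext (by simpa using h0)
    · rintro rfl; exact Ideal.zero_mem _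
  · -- injective pair map
    intro x y h
    exact Subtype.ext (congrArg Prod.snd h)
  · -- range
    ext ⟨a, r⟩
    simp only [Set.mem_range, Set.mem_setOf_eq]
    constructor
    · rintro ⟨x, hx⟩
      obtain ⟨h1, h2⟩ := Prod.mk.injEq .. ▸ hx
      subst h1 h2
      exact hcomm x
    · intro h
      have hr : r ∈ A' := by simp [hA', ← h]
      exact ⟨⟨r, hr⟩, by simp [hunique ⟨r, hr⟩ a h]⟩
end
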